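/- For each n ∈ ℕ let (Ω_n, F_n, P_n) be a probability space with measurable involution Θ_n such that P̂_n = P_n∘Θ_n is equivalent to P_n, and set σ_n = log(dP_n/dP̂_n). Suppose there is a lower semicontinuous function I: ℝ → [0, +∞] such that for every Borel set Γ ⊂ ℝ: −inf_{s ∈ int(Γ)} I(s) ≤ liminf_n (1/n) log P_n{σ_n/n ∈ Γ} ≤ limsup_n (1/n) log P_n{σ_n/n ∈ Γ} ≤ −inf_{s ∈ cl(Γ)} I(s). Then I(−s) = I(s) + s for all s ∈ ℝ. -/

import Mathlib

open MeasureTheory Filter Topology Set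
open scoped ENNReal

private lemma ereal_coe_mul_add (r x : ℝ) (hr : 0 ≤ r) (y : EReal) :
    (r : EReal) * ((x : EReal) + y) = ((r * x : ℝ) : EReal) + (r : EReal) * y := by
  rcases eq_or_lt_of_le hr with h | h
  · induction y using EReal.rec with
    | bot => simp [← h]
    | coe a => norm_cast; ring
    | top => simp [← h]
  · induction y using EReal.rec with
    | bot =>
        rw [EReal.add_bot, EReal.coe_mul_bot_of_pos h, EReal.add_bot]
    | coe a => norm_cast; ring
    | top =>
        rw [EReal.coe_add_top, EReal.coe_mul_top_of_pos h, EReal.coe_add_top]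

private lemma ereal_add_neg_cancel (x : EReal) (r : ℝ) :
    x + ((-r : ℝ) : EReal) + (r : EReal) = x := by
  induction x using EReal.rec with
  | bot => rw [EReal.bot_add, EReal.bot_add]
  | coe a => norm_cast; ring
  | top => rw [EReal.top_add_coe, EReal.top_add_coe]

theorem fluctuation_relation_of_fluctuation_theorem
    (Ω : ℕ → Type*) [∀ n, MeasurableSpace (Ω n)]
    (P : ∀ n, Measure (Ω n)) [∀ n, IsProbabilityMeasure (P n)]
    (Θ : ∀ n, Ω n → Ω n) (hΘmeas : ∀ n, Measurable (Θ n))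
    (hΘinv : ∀ n, Θ n ∘ Θ n = id)
    (hequiv : ∀ n, (P n).map (Θ n) ≪ P n ∧ P n ≪ (P n).map (Θ n))
    (σ : ∀ n, Ω n → ℝ)
    (hσ : ∀ n, σ n = fun ω => Real.log (((P n).rnDeriv ((P n).map (Θ n))) ω).toReal)
    (I : ℝ → EReal) (hInonneg : ∀ s, 0 ≤ I s) (hIlsc : LowerSemicontinuous I)
    (hLDP : ∀ Γ : Set ℝ, MeasurableSet Γ →
      -(⨅ s ∈ interior Γ, I s) ≤
          Filter.liminf
            (fun n : ℕ => (((n : ℝ)⁻¹ : ℝ) : EReal) *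
              ENNReal.log ((P n) {ω | σ n ω / n ∈ Γ})) atTop ∧
        Filter.limsup
            (fun n : ℕ => (((n : ℝ)⁻¹ : ℝ) : EReal) *
              ENNReal.log ((P n) {ω | σ n ω / n ∈ Γ})) atTop ≤
          -(⨅ s ∈ closure Γ, I s)) :
    ∀ s : ℝ, I (-s) = I s + (s : EReal) := by
  -- measurability of σ
  have hσmeas : ∀ n, Measurable (σ n) := by
    intro n
    rw [hσ n]
    exact Real.measurable_log.comp
      (Measure.measurable_rnDeriv _ _).ennreal_toReal
  have hBmeas : ∀ (n : ℕ) (S : Set ℝ), MeasurableSet S →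
      MeasurableSet {ω | σ n ω / n ∈ S} := by
    intro n S hS
    exact (hσmeas n).div_const _ hS
  -- Step 1: the per-n measure inequality
  have measIneq : ∀ (n : ℕ), 1 ≤ n → ∀ (a : ℝ) (Γ : Set ℝ), MeasurableSet Γ →
      (∀ x ∈ Γ, a ≤ x) →
      P n {ω | σ n ω / n ∈ Neg.neg ⁻¹' Γ} ≤
        ENNReal.ofReal (Real.exp (-((n : ℝ) * a))) * P n {ω | σ n ω / n ∈ Γ} := by
    intro n hn a Γ hΓ hΓa
    have hn' : (0 : ℝ) < n := by exact_mod_cast hn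
    set ν := (P n).map (Θ n) with hν
    haveI : IsProbabilityMeasure ν := Measure.isProbabilityMeasure_map (hΘmeas n).aemeasurable
    obtain ⟨hν₁, hν₂⟩ := hequiv n
    set f := (P n).rnDeriv ν with hfdef
    have hfm : Measurable f := Measure.measurable_rnDeriv _ _
    have hpos : ∀ᵐ ω ∂(P n), 0 < f ω := Measure.rnDeriv_pos hν₂
    have hlt : ∀ᵐ ω ∂(P n), f ω < ∞ := hν₂.ae_le (Measure.rnDeriv_lt_top (P n) ν)
    -- ν = P.withDensity (f ∘ Θ)
    have hΘΘ : ∀ x, Θ n (Θ n x) = x := fun x => congrFun (hΘinv n) x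
    have hmapmap : ν.map (Θ n) = P n := by
      rw [hν, Measure.map_map (hΘmeas n) (hΘmeas n), hΘinv n, Measure.map_id]
    have hwd : ν = (P n).withDensity (f ∘ Θ n) := by
      ext A hA
      rw [withDensity_apply _ hA]
      have h1 : ν A = P n (Θ n ⁻¹' A) := Measure.map_apply (hΘmeas n) hA
      have h2 : P n (Θ n ⁻¹' A) = ∫⁻ ω in Θ n ⁻¹' A, f ω ∂ν :=
        (Measure.setLIntegral_rnDeriv hν₂ _).symm
      have h3 : ∫⁻ ω in A, (f ∘ Θ n) ω ∂(P n) = ∫⁻ ω in Θ n ⁻¹' A, f ω ∂ν := by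
        conv_lhs => rw [← hmapmap]
        rw [setLIntegral_map hA (hfm.comp (hΘmeas n)) (hΘmeas n)]
        apply lintegral_congr
        intro x
        simp only [Function.comp_apply, hΘΘ]
      rw [h1, h2, ← h3]
    have hg : ν.rnDeriv (P n) =ᵐ[P n] (f ∘ Θ n) := by
      conv_lhs => rw [hwd]
      exact Measure.rnDeriv_withDensity (P n) (hfm.comp (hΘmeas n))
    have hinv : f⁻¹ =ᵐ[P n] ν.rnDeriv (P n) := Measure.inv_rnDeriv hν₂
    have hfΘ : (f ∘ Θ n) =ᵐ[P n] f⁻¹ := hg.symm.trans hinv.symm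
    -- σ ∘ Θ = -σ a.e.
    have hσΘ : ∀ᵐ ω ∂(P n), σ n (Θ n ω) = - σ n ω := by
      filter_upwards [hfΘ] with ω h1
      simp only [Function.comp_apply, Pi.inv_apply] at h1
      rw [hσ n]
      simp only
      rw [← hfdef, h1, ENNReal.toReal_inv, Real.log_inv]
    set B : Set (Ω n) := {ω | σ n ω / n ∈ Γ} with hB
    have hBm : MeasurableSet B := hBmeas n Γ hΓ
    -- P B' = ν B
    have hsets : {ω | σ n ω / n ∈ Neg.neg ⁻¹' Γ} =ᵐ[P n] Θ n ⁻¹' B := by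
      rw [Filter.eventuallyEq_set]
      filter_upwards [hσΘ] with ω h
      simp only [Set.mem_setOf_eq, Set.mem_preimage, hB, h, neg_div]
    have hPB' : P n {ω | σ n ω / n ∈ Neg.neg ⁻¹' Γ} = ν B := by
      rw [measure_congr hsets, ← Measure.map_apply (hΘmeas n) hBm]
    -- bound the density on B
    have hbound : ∀ᵐ ω ∂(P n), ω ∈ B → ν.rnDeriv (P n) ω ≤
        ENNReal.ofReal (Real.exp (-((n : ℝ) * a))) := by
      filter_upwards [hinv, hpos, hlt] with ω h1 h2 h3 hωB
      rw [← h1, Pi.inv_apply]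
      have hfr : 0 < (f ω).toReal := ENNReal.toReal_pos h2.ne' h3.ne
      have hσω : a ≤ σ n ω / n := hΓa _ hωB
      have hna : (n : ℝ) * a ≤ σ n ω := by
        rw [le_div_iff₀ hn'] at hσω
        nlinarith
      have hexp : Real.exp ((n : ℝ) * a) ≤ (f ω).toReal := by
        calc Real.exp ((n : ℝ) * a) ≤ Real.exp (σ n ω) := Real.exp_le_exp.2 hna
          _ = (f ω).toReal := by rw [hσ n]; exact Real.exp_log hfr
      have hle : ENNReal.ofReal (Real.exp ((n : ℝ) * a)) ≤ f ω := by
        rw [← ENNReal.ofReal_toReal h3.ne]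
        exact ENNReal.ofReal_le_ofReal hexp
      calc (f ω)⁻¹ ≤ (ENNReal.ofReal (Real.exp ((n : ℝ) * a)))⁻¹ :=
            ENNReal.inv_le_inv.2 hle
        _ = ENNReal.ofReal (Real.exp (-((n : ℝ) * a))) := by
            rw [Real.exp_neg, ENNReal.ofReal_inv_of_pos (Real.exp_pos _)]
    calc P n {ω | σ n ω / n ∈ Neg.neg ⁻¹' Γ} = ν B := hPB'
      _ = ∫⁻ ω in B, ν.rnDeriv (P n) ω ∂(P n) :=
          (Measure.setLIntegral_rnDeriv hν₁ B).symm
      _ ≤ ∫⁻ _ in B, ENNReal.ofReal (Real.exp (-((n : ℝ) * a))) ∂(P n) := by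
          refine setLIntegral_mono_ae measurable_const.aemeasurable ?_
          exact hbound
      _ = ENNReal.ofReal (Real.exp (-((n : ℝ) * a))) * P n B := setLIntegral_const _ _
  -- the log-scale sequences
  set L : Set ℝ → ℕ → EReal := fun Γ n =>
    (((n : ℝ)⁻¹ : ℝ) : EReal) * ENNReal.log ((P n) {ω | σ n ω / n ∈ Γ}) with hL
  -- Step 2: eventual EReal inequality
  have evIneq : ∀ (a : ℝ) (Γ : Set ℝ), MeasurableSet Γ → (∀ x ∈ Γ, a ≤ x) →
      ∀ n : ℕ, 1 ≤ n → L (Neg.neg ⁻¹' Γ) n ≤ ((-a : ℝ) : EReal) + L Γ n := by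
    intro a Γ hΓ hΓa n hn
    have hn' : (0 : ℝ) < n := by exact_mod_cast hn
    have h := measIneq n hn a Γ hΓ hΓa
    have hlog := ENNReal.log_monotone h
    rw [ENNReal.log_mul_add, ENNReal.log_ofReal_of_pos (Real.exp_pos _), Real.log_exp] at hlog
    have hmul : (((n : ℝ)⁻¹ : ℝ) : EReal) * ENNReal.log (P n {ω | σ n ω / n ∈ Neg.neg ⁻¹' Γ}) ≤
        (((n : ℝ)⁻¹ : ℝ) : EReal) * (((-((n : ℝ) * a) : ℝ) : EReal) +
          ENNReal.log (P n {ω | σ n ω / n ∈ Γ})) :=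
      mul_le_mul_of_nonneg_left hlog (EReal.coe_nonneg.2 (inv_nonneg.2 hn'.le))
    rw [ereal_coe_mul_add _ _ (inv_nonneg.2 hn'.le) _] at hmul
    have harith : (n : ℝ)⁻¹ * (-((n : ℝ) * a)) = -a := by
      field_simp
    rw [harith] at hmul
    exact hmul
  -- Step 3: liminf/limsup comparison
  have liminfle : ∀ (c : ℝ) (u v : ℕ → EReal),
      (∀ᶠ n in atTop, v n ≤ (c : EReal) + u n) →
      liminf v atTop ≤ (c : EReal) + limsup u atTop := by
    intro c u v hev
    have h1 : liminf v atTop ≤ liminf (fun n => (c : EReal) + u n) atTop :=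
      liminf_le_liminf hev
    have h2 : liminf ((fun _ : ℕ => (c : EReal)) + u) atTop ≤
        limsup (fun _ : ℕ => (c : EReal)) atTop + liminf u atTop := by
      refine EReal.liminf_add_le ?_ ?_
      · left; rw [limsup_const]; exact EReal.coe_ne_bot c
      · left; rw [limsup_const]; exact EReal.coe_ne_top c
    rw [limsup_const] at h2
    refine h1.trans (h2.trans ?_)
    exact add_le_add_right (liminf_le_limsup) _
  -- Step 4: the key half
  have key : ∀ s : ℝ, I (-s) ≤ I s + (s : EReal) := by
    intro s
    by_contra hcon
    push_neg at hcon
    obtain ⟨z, hz1, hz2⟩ := EReal.exists_between_coe_real hcon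
    -- I s ≠ ⊤
    have hIsne : I s ≠ ⊤ := by
      intro h
      rw [h] at hz1
      rw [EReal.top_add_coe] at hz1
      exact (not_top_lt hz1).elim
    have hIsnb : I s ≠ ⊥ := ne_of_gt (lt_of_lt_of_le EReal.bot_lt_zero (hInonneg s))
    set c := (I s).toReal with hc
    have hIs : I s = (c : EReal) := (EReal.coe_toReal hIsne hIsnb).symm
    have hcz : c + s < z := by
      have : ((c + s : ℝ) : EReal) < (z : EReal) := by
        rw [EReal.coe_add, ← hIs]; exact hz1
      exact_mod_cast this
    -- lower semicontinuity at -s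
    have hlsc := hIlsc (-s) (z : EReal) hz2
    rw [Metric.eventually_nhds_iff] at hlsc
    obtain ⟨δ, hδpos, hδ⟩ := hlsc
    set ε := min (δ / 2) ((z - (c + s)) / 2) with hε
    have hεpos : 0 < ε := by
      apply lt_min
      · linarith
      · linarith
    have hεδ : ε < δ := by
      have : ε ≤ δ / 2 := min_le_left _ _
      linarith
    have hεz : c + s + ε < z := by
      have : ε ≤ (z - (c + s)) / 2 := min_le_right _ _
      linarith
    set Γ : Set ℝ := Ioo (s - ε) (s + ε) with hΓdef
    set Γ' : Set ℝ := Ioo (-s - ε) (-s + ε) with hΓ'def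
    have hnegΓ' : Neg.neg ⁻¹' Γ' = Γ := by
      ext x
      simp only [Set.mem_preimage, Set.mem_Ioo, hΓ'def, hΓdef]
      constructor
      · rintro ⟨h1, h2⟩; constructor <;> linarith
      · rintro ⟨h1, h2⟩; constructor <;> linarith
    -- eventual inequality : L Γ n ≤ (s+ε) + L Γ' n
    have hev : ∀ᶠ n in atTop, L Γ n ≤ ((s + ε : ℝ) : EReal) + L Γ' n := by
      rw [eventually_atTop]
      refine ⟨1, fun n hn => ?_⟩
      have := evIneq (-s - ε) Γ' measurableSet_Ioo
        (fun x hx => (hx.1 : -s - ε < x).le) n hn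
      rw [hnegΓ'] at this
      have harith : (-(-s - ε) : ℝ) = s + ε := by ring
      rwa [harith] at this
    have hcomp := liminfle (s + ε) (L Γ') (L Γ) hev
    -- LDP bounds
    have hLDPΓ := (hLDP Γ measurableSet_Ioo).1
    have hLDPΓ' := (hLDP Γ' measurableSet_Ioo).2
    -- lower bound: -(I s) ≤ liminf L Γ
    have hintΓ : interior Γ = Γ := isOpen_Ioo.interior_eq
    have hsΓ : s ∈ Γ := by
      rw [hΓdef]; constructor <;> [linarith; linarith]
    have hinf1 : (⨅ x ∈ interior Γ, I x) ≤ I s := by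
      rw [hintΓ]
      exact iInf₂_le s hsΓ
    have hlow : -(I s) ≤ liminf (L Γ) atTop := by
      refine le_trans ?_ hLDPΓ
      exact EReal.neg_le_neg_iff.2 hinf1
    -- upper bound: limsup L Γ' ≤ -z
    have hinf2 : (z : EReal) ≤ ⨅ x ∈ closure Γ', I x := by
      refine le_iInf₂ fun x hx => ?_
      have hxIcc : x ∈ Icc (-s - ε) (-s + ε) :=
        (closure_minimal Ioo_subset_Icc_self isClosed_Icc) hx
      have hdist : dist x (-s) < δ := by
        rw [Real.dist_eq]
        rw [abs_lt]
        obtain ⟨h1, h2⟩ := hxIcc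
        constructor <;> linarith
      exact (hδ hdist).le
    have hup : limsup (L Γ') atTop ≤ -(z : EReal) := by
      refine hLDPΓ'.trans ?_
      exact EReal.neg_le_neg_iff.2 hinf2
    -- assemble
    have hchain : -(I s) ≤ ((s + ε - z : ℝ) : EReal) := by
      calc -(I s) ≤ liminf (L Γ) atTop := hlow
        _ ≤ ((s + ε : ℝ) : EReal) + limsup (L Γ') atTop := hcomp
        _ ≤ ((s + ε : ℝ) : EReal) + -(z : EReal) := add_le_add_right hup _
        _ = ((s + ε - z : ℝ) : EReal) := by
            rw [← EReal.coe_neg, ← EReal.coe_add]; ring_nf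
    rw [hIs, ← EReal.coe_neg, EReal.coe_le_coe_iff] at hchain
    linarith
  -- conclude
  intro s
  refine le_antisymm (key s) ?_
  have h2 := key (-s)
  rw [neg_neg] at h2
  have h3 : I s + (s : EReal) ≤ (I (-s) + ((-s : ℝ) : EReal)) + (s : EReal) :=
    add_le_add_left h2 _
  rwa [ereal_add_neg_cancel (I (-s)) s] at h3
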